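/- Let T and T' be maximally reduced MUL-trees with I(T) = I(T'), and let φ be a bijection between their internal edges such that corresponding edges have equal M-sets on corresponding sides. If (u,v) and (v,x) are adjacent internal edges of T sharing the vertex v, and (p,q) = φ(u,v) and (r,s) = φ(v,x) are oriented so that M_u^{uv} = M_p^{pq} and M_v^{vx} = M_r^{rs}, then q = r; that is, the image edges are adjacent in T' and share a common endpoint corresponding to v. -/

import Mathlib

open SimpleGraph

variable {V V' L L' : Type}

/-- Degree of a vertex, via `Set.ncard` of the neighbor set (no instances needed). -/
noncomputable def deg (G : SimpleGraph V) (v : V) : ℕ := (G.neighborSet v).ncard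

/-- A leaf is a vertex of degree one. -/
def IsLeaf (G : SimpleGraph V) (v : V) : Prop := deg G v = 1

/-- The vertex set of the subtree `T_u^{uv}`: vertices reachable from `u`
after deleting the edge `(u,v)`. -/
def side (G : SimpleGraph V) (u v : V) : Set V :=
  {w | (G.deleteEdges {s(u, v)}).Reachable w u}

/-- Labels appearing on leaves of the `u`-side of the edge `(u,v)`. -/
def sideLabels (G : SimpleGraph V) (ψ : V → L) (u v : V) : Set L :=
  {m | ∃ w, IsLeaf G w ∧ w ∈ side G u v ∧ ψ w = m}

/-- `M_u^{uv}`: labels appearing on leaves of `T_u^{uv}` but not of `T_v^{uv}`. -/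
def Mside (G : SimpleGraph V) (ψ : V → L) (u v : V) : Set L :=
  sideLabels G ψ u v \ sideLabels G ψ v u

/-- `C^{uv}`: labels appearing on leaves of both sides of the edge `(u,v)`. -/
def Cside (G : SimpleGraph V) (ψ : V → L) (u v : V) : Set L :=
  sideLabels G ψ u v ∩ sideLabels G ψ v u

/-- A quartet `ab|cd`: an unordered pair of unordered pairs of labels. -/
abbrev Quartet (L : Type) := Sym2 (Sym2 L)

/-- The edge `(u,v)` resolves the quartet `q = ab|cd` when `{a,b} ⊆ M_u^{uv}` and
`{c,d} ⊆ M_v^{uv}` (with `a,b,c,d` four distinct labels). -/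
def Resolves (G : SimpleGraph V) (ψ : V → L) (u v : V) (q : Quartet L) : Prop :=
  G.Adj u v ∧ ∃ a b c d : L, a ≠ b ∧ c ≠ d ∧
    a ∈ Mside G ψ u v ∧ b ∈ Mside G ψ u v ∧
    c ∈ Mside G ψ v u ∧ d ∈ Mside G ψ v u ∧
    q = s(s(a, b), s(c, d))

/-- `Δ(u,v)`: the set of quartets resolved by the edge `(u,v)`. -/
def Δ (G : SimpleGraph V) (ψ : V → L) (u v : V) : Set (Quartet L) :=
  {q | Resolves G ψ u v q}

/-- The information content `I(T)`: all quartets resolved by some edge. -/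
def infoContent (G : SimpleGraph V) (ψ : V → L) : Set (Quartet L) :=
  {q | ∃ u v, Resolves G ψ u v q}

/-- The label set `M`: labels carried by the leaves. -/
def labelSet (G : SimpleGraph V) (ψ : V → L) : Set L :=
  {m | ∃ v, IsLeaf G v ∧ ψ v = m}

/-- Singly labeled: the labeling map is injective on leaves. -/
def SinglyLabeled (G : SimpleGraph V) (ψ : V → L) : Prop :=
  ∀ v w, IsLeaf G v → IsLeaf G w → ψ v = ψ w → v = w

/-- A MUL-tree: a finite unrooted tree (encoded as the nontrivial connected component
of `G`; vertices outside `G.support` are unused isolated vertices) together with a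
labeling `ψ` of its leaves, such that every internal (non-leaf) node has degree ≥ 3.
The label set `M` is `labelSet G ψ`, onto which `ψ` (restricted to leaves) is
automatically surjective. -/
structure MulTree (V L : Type) : Type where
  G : SimpleGraph V
  ψ : V → L
  fin : Finite V
  acyclic : G.IsAcyclic
  conn : ∀ u ∈ G.support, ∀ v ∈ G.support, G.Reachable u v
  internal3 : ∀ v ∈ G.support, ¬ IsLeaf G v → 3 ≤ deg G v

/-- `y` lies on the (unique) path between `a` and `b`: `a,b` are connected and
every walk from `a` to `b` passes through `y`. -/
def OnPath (G : SimpleGraph V) (y a b : V) : Prop :=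
  G.Reachable a b ∧ ∀ p : G.Walk a b, y ∈ p.support

/-- The edges `(u,v)` and `(w,x)` lie, in this order, on the path
`P_{u,x} = (u, v, …, w, x)` (possibly `v = w`). -/
def PathConfig (G : SimpleGraph V) (u v w x : V) : Prop :=
  G.Adj u v ∧ G.Adj w x ∧ OnPath G v u x ∧ OnPath G w v x

/-- An internal edge: both endpoints are internal (non-leaf) nodes. -/
def InternalEdge (G : SimpleGraph V) (a b : V) : Prop :=
  G.Adj a b ∧ ¬ IsLeaf G a ∧ ¬ IsLeaf G b

/-- Contracting the edge `(a,b)`: identify `b` with `a` (the vertex `b` becomes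
an unused isolated vertex). -/
def contractEdge (G : SimpleGraph V) (a b : V) : SimpleGraph V where
  Adj x y := x ≠ y ∧ x ≠ b ∧ y ≠ b ∧
    (G.Adj x y ∨ (x = a ∧ G.Adj b y) ∨ (y = a ∧ G.Adj x b))
  symm := by
    constructor
    rintro x y ⟨h1, h2, h3, h4 | ⟨hx, hy⟩ | ⟨hy, hx⟩⟩
    · exact ⟨h1.symm, h3, h2, Or.inl h4.symm⟩
    · exact ⟨h1.symm, h3, h2, Or.inr (Or.inr ⟨hx, hy.symm⟩)⟩
    · exact ⟨h1.symm, h3, h2, Or.inr (Or.inl ⟨hy, hx.symm⟩)⟩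
  loopless := ⟨fun x h => h.1 rfl⟩

/-- `PruneSpec G v₀ G'` : `G'` is the result of pruning the leaf `v₀` from `G`:
delete `v₀` (i.e. its unique edge); if as a result the neighbor `u` of `v₀`
becomes a degree-two node, additionally delete `u` and connect its former two
other neighbors by an edge. Deleted vertices become unused isolated vertices. -/
def PruneSpec (G : SimpleGraph V) (v₀ : V) (G' : SimpleGraph V) : Prop :=
  ∃ u, G.neighborSet v₀ = {u} ∧
    ((deg G u ≠ 3 ∧ G' = G.deleteEdges {s(u, v₀)}) ∨
     (deg G u = 3 ∧ ∃ p q, p ≠ q ∧ p ≠ v₀ ∧ q ≠ v₀ ∧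
        G.neighborSet u = {v₀, p, q} ∧
        G' = G.deleteEdges {s(u, v₀), s(u, p), s(u, q)} ⊔ fromEdgeSet {s(p, q)}))

/-- A leaf is prunable if pruning it leaves the information content unchanged. -/
def Prunable (G : SimpleGraph V) (ψ : V → L) (v₀ : V) : Prop :=
  IsLeaf G v₀ ∧ ∃ G', PruneSpec G v₀ G' ∧ infoContent G' ψ = infoContent G ψ

/-- An internal edge is contractible if contracting it leaves the information
content unchanged. -/
def Contractible (G : SimpleGraph V) (ψ : V → L) (a b : V) : Prop :=
  InternalEdge G a b ∧ infoContent (contractEdge G a b) ψ = infoContent G ψ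

/-- Maximally reduced: no prunable leaf and no contractible internal edge. -/
def MaximallyReduced (G : SimpleGraph V) (ψ : V → L) : Prop :=
  (∀ v, ¬ Prunable G ψ v) ∧ (∀ a b, ¬ Contractible G ψ a b)

/-- One reduction step: prune a prunable leaf or contract a contractible
internal edge. -/
def ReduceStep (ψ : V → L) (G G' : SimpleGraph V) : Prop :=
  (∃ v₀, Prunable G ψ v₀ ∧ PruneSpec G v₀ G') ∨
  (∃ a b, Contractible G ψ a b ∧ G' = contractEdge G a b)

/-- `H` is a maximally reduced form (MRF) of `G`: obtained from `G` by repeatedly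
pruning prunable leaves and contracting contractible internal edges, until
neither operation is possible. -/
def IsMRF (ψ : V → L) (G H : SimpleGraph V) : Prop :=
  Relation.ReflTransGen (ReduceStep ψ) G H ∧ MaximallyReduced H ψ

/-- Label-preserving isomorphism of (leaf-labeled) trees: a graph isomorphism
between the supports mapping leaves to leaves and preserving leaf labels. -/
def LIso (G : SimpleGraph V) (ψ : V → L) (G' : SimpleGraph V') (ψ' : V' → L) : Prop :=
  ∃ f : G.support ≃ G'.support,
    (∀ x y : G.support, G'.Adj (f x).1 (f y).1 ↔ G.Adj x.1 y.1) ∧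
    (∀ x : G.support, IsLeaf G x.1 → IsLeaf G' (f x).1 ∧ ψ' (f x).1 = ψ x.1)

/-- The set of internal edges of `G`, as unordered pairs. -/
def internalEdgeSet (G : SimpleGraph V) : Set (Sym2 V) :=
  {e | ∃ a b, e = s(a, b) ∧ InternalEdge G a b}

/-- The subtree `T_z^{yz}` branches out from the path `P_{u,x}` :
`y` is an interior vertex of the path and `z` is off the path. -/
def BranchesOut (G : SimpleGraph V) (u x y z : V) : Prop :=
  G.Adj y z ∧ OnPath G y u x ∧ y ≠ u ∧ y ≠ x ∧ ¬ OnPath G z u x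

/-- Vertices of the minimal subtree spanning all leaves labeled `ℓ`. -/
def spanVerts (G : SimpleGraph V) (ψ : V → L) (ℓ : L) : Set V :=
  {p | ∃ c d, IsLeaf G c ∧ IsLeaf G d ∧ ψ c = ℓ ∧ ψ d = ℓ ∧ OnPath G p c d}

/-- Degree of `y` within the subtree induced on the vertex set `S`. -/
noncomputable def degIn (G : SimpleGraph V) (S : Set V) (y : V) : ℕ :=
  (G.neighborSet y ∩ S).ncard

/-- One step of deleting a leaf labeled `ℓ` (by pruning, with suppression). -/
def PruneLabelStep (ψ : V → L) (ℓ : L) (G G' : SimpleGraph V) : Prop :=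
  ∃ v₀, IsLeaf G v₀ ∧ ψ v₀ = ℓ ∧ PruneSpec G v₀ G'


lemma adj_ne_of_sym2_ne' {V : Type} {a b u v : V} (h : s(a,b) ≠ s(u,v)) : s(b,a) ≠ s(u,v) := by
  rwa [Sym2.eq_swap]
section Aux

variable {G : SimpleGraph V} {ψ : V → L}

lemma mem_side_self (u v : V) : u ∈ side G u v := Reachable.refl u

lemma del_adj {a b u v : V} (hab : G.Adj a b) (hne : s(a,b) ≠ s(u,v)) :
    (G.deleteEdges {s(u,v)}).Adj a b := by
  rw [deleteEdges_adj]
  exact ⟨hab, by simpa using hne⟩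

lemma side_adj {a b u v : V} (hab : G.Adj a b) (hne : s(a,b) ≠ s(u,v))
    (ha : a ∈ side G u v) : b ∈ side G u v :=
  Reachable.trans (del_adj hab.symm (adj_ne_of_sym2_ne' hne)).reachable ha

lemma sides_disjoint (hac : G.IsAcyclic) {u v w : V} (huv : G.Adj u v)
    (h1 : w ∈ side G u v) (h2 : w ∈ side G v u) : False := by
  have hb := (isAcyclic_iff_forall_adj_isBridge.mp hac) huv
  rw [isBridge_iff] at hb
  have : (G.deleteEdges {s(u,v)}).Reachable u v := by
    have h2' : (G.deleteEdges {s(v,u)}).Reachable w v := h2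
    rw [show s(v,u) = s(u,v) from Sym2.eq_swap] at h2'
    exact ((h1 : (G.deleteEdges {s(u,v)}).Reachable w u).symm.trans h2')
  exact hb this

lemma walk_side {u v : V} (huv : G.Adj u v) :
    ∀ {w : V}, G.Walk w u → w ∈ side G u v ∨ w ∈ side G v u
  | _, Walk.nil => Or.inl (mem_side_self u v)
  | w, @Walk.cons _ _ _ w' _ hadj p =>
    match walk_side huv p with
    | Or.inl h => by
      by_cases he : s(w, w') = s(u,v)
      · rw [Sym2.eq_iff] at he
        rcases he with ⟨rfl, rfl⟩ | ⟨rfl, rfl⟩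
        · exact Or.inl (mem_side_self _ _)
        · exact Or.inr (mem_side_self _ _)
      · exact Or.inl (side_adj hadj.symm (adj_ne_of_sym2_ne' he) h)
    | Or.inr h => by
      by_cases he : s(w, w') = s(u,v)
      · rw [Sym2.eq_iff] at he
        rcases he with ⟨rfl, rfl⟩ | ⟨rfl, rfl⟩
        · exact Or.inl (mem_side_self _ _)
        · exact Or.inr (mem_side_self _ _)
      · refine Or.inr (side_adj hadj.symm ?_ h)
        rw [Sym2.eq_swap]
        rw [show s(u,v) = s(v,u) from Sym2.eq_swap] at he
        exact he

lemma side_partition {u v w : V} (hr : G.Reachable w u) (huv : G.Adj u v) :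
    w ∈ side G u v ∨ w ∈ side G v u := by
  obtain ⟨p⟩ := hr
  exact walk_side huv p

/-- Lemma A : side monotonicity. -/
lemma side_subset_side {a b c d : V} (hc : c ∈ side G a b) (hb : b ∉ side G c d) :
    side G c d ⊆ side G a b := by
  classical
  intro w hw
  obtain ⟨p⟩ := (hw : (G.deleteEdges {s(c,d)}).Reachable w c)
  have hbs : b ∉ p.support := by
    intro hbp
    exact hb ((p.dropUntil b hbp).reachable)
  have hedges : ∀ e ∈ p.edges, e ∈ (G.deleteEdges {s(a,b)}).edgeSet := by
    intro e he
    have heG : e ∈ (G.deleteEdges {s(c,d)}).edgeSet := p.edges_subset_edgeSet he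
    rw [edgeSet_deleteEdges] at heG ⊢
    refine ⟨heG.1, ?_⟩
    intro hee
    rw [Set.mem_singleton_iff] at hee
    subst hee
    exact hbs (p.snd_mem_support_of_mem_edges he)
  exact Reachable.trans ((p.transfer _ hedges).reachable) hc

lemma sideLabels_mono {a b c d : V} (h : side G a b ⊆ side G c d) :
    sideLabels G ψ a b ⊆ sideLabels G ψ c d := by
  rintro m ⟨w, hw, hws, rfl⟩
  exact ⟨w, hw, h hws, rfl⟩

lemma mside_mono {a b c d : V} (h1 : side G a b ⊆ side G c d)
    (h2 : side G d c ⊆ side G b a) : Mside G ψ a b ⊆ Mside G ψ c d := by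
  rintro m ⟨hm1, hm2⟩
  exact ⟨sideLabels_mono h1 hm1, fun hc => hm2 (sideLabels_mono h2 hc)⟩

lemma mside_disjoint {u v : V} {m : L} (h1 : m ∈ Mside G ψ u v) (h2 : m ∈ Mside G ψ v u) :
    False := h1.2 h2.1

lemma leaf_mem_support {w : V} (h : IsLeaf G w) : w ∈ G.support := by
  have : (G.neighborSet w).Nonempty := by
    apply Set.nonempty_of_ncard_ne_zero
    rw [show (G.neighborSet w).ncard = deg G w from rfl, h]
    exact one_ne_zero
  obtain ⟨y, hy⟩ := this
  exact ⟨y, hy⟩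

end Aux
section Contract

variable {G : SimpleGraph V} {ψ : V → L}

lemma reach_map {A B : SimpleGraph V} (f : V → V)
    (hf : ∀ a b, A.Adj a b → f a = f b ∨ B.Adj (f a) (f b)) {u v : V}
    (h : A.Reachable u v) : B.Reachable (f u) (f v) := by
  obtain ⟨p⟩ := h
  induction p with
  | nil => exact Reachable.refl _
  | cons hadj p ih =>
    rcases hf _ _ hadj with he | ha
    · rw [he]; exact ih
    · exact ha.reachable.trans ih

lemma reach_lift {A B : SimpleGraph V} (hf : ∀ a b, A.Adj a b → B.Reachable a b) {u v : V}
    (h : A.Reachable u v) : B.Reachable u v := by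
  obtain ⟨p⟩ := h
  induction p with
  | nil => exact Reachable.refl _
  | cons hadj p ih => exact (hf _ _ hadj).trans ih

lemma no_triangle (hac : G.IsAcyclic) {g h w : V} (h1 : G.Adj g h) (h2 : G.Adj g w)
    (h3 : G.Adj h w) : False := by
  have hb := (isAcyclic_iff_forall_adj_isBridge.mp hac) h1
  rw [isBridge_iff] at hb
  refine hb ?_
  have e1 : (G.deleteEdges {s(g,h)}).Adj g w := by
    refine del_adj h2 ?_
    intro hc
    rw [Sym2.eq_iff] at hc
    rcases hc with ⟨he1, he2⟩ | ⟨he1, he2⟩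
    · exact h3.ne he2.symm
    · exact h1.ne he1
  have e2 : (G.deleteEdges {s(g,h)}).Adj w h := by
    refine del_adj h3.symm ?_
    intro hc
    rw [Sym2.eq_iff] at hc
    rcases hc with ⟨he1, he2⟩ | ⟨he1, he2⟩
    · exact h2.ne he1.symm
    · exact h1.ne he2.symm
  exact e1.reachable.trans e2.reachable

variable {g h : V}

lemma contract_adj {x y : V} :
    (contractEdge G g h).Adj x y ↔ x ≠ y ∧ x ≠ h ∧ y ≠ h ∧
      (G.Adj x y ∨ (x = g ∧ G.Adj h y) ∨ (y = g ∧ G.Adj x h)) := Iff.rfl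

lemma contract_neighborSet_of_not_adj (hac : G.IsAcyclic) (hgh : G.Adj g h)
    {w : V} (hwg : w ≠ g) (hwh : w ≠ h) (hnadj : ¬ G.Adj w h) :
    (contractEdge G g h).neighborSet w = G.neighborSet w := by
  ext y
  simp only [mem_neighborSet, contract_adj]
  constructor
  · rintro ⟨h1, h2, h3, h4 | ⟨rfl, h5⟩ | ⟨rfl, h5⟩⟩
    · exact h4
    · exact absurd rfl hwg
    · exact absurd h5 hnadj
  · intro hadj
    have hyh : y ≠ h := fun he => hnadj (he ▸ hadj)
    exact ⟨hadj.ne, hwh, hyh, Or.inl hadj⟩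

lemma contract_neighborSet_of_adj (hac : G.IsAcyclic) (hgh : G.Adj g h)
    {w : V} (hwg : w ≠ g) (hwh : w ≠ h) (hadj : G.Adj w h) :
    (contractEdge G g h).neighborSet w = insert g (G.neighborSet w \ {h}) := by
  have hng : ¬ G.Adj w g := fun hc => no_triangle hac hgh hc.symm hadj.symm
  ext y
  simp only [mem_neighborSet, contract_adj, Set.mem_insert_iff, Set.mem_diff,
    Set.mem_singleton_iff]
  constructor
  · rintro ⟨h1, h2, h3, h4 | ⟨rfl, h5⟩ | ⟨rfl, h5⟩⟩
    · exact Or.inr ⟨h4, h3⟩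
    · exact absurd rfl hwg
    · exact Or.inl rfl
  · rintro (rfl | ⟨h4, h5⟩)
    · exact ⟨hwg, hwh, hgh.ne, Or.inr (Or.inr ⟨rfl, hadj⟩)⟩
    · exact ⟨h4.ne, hwh, h5, Or.inl h4⟩

lemma contract_deg_eq (hfin : Finite V) (hac : G.IsAcyclic) (hgh : G.Adj g h)
    {w : V} (hwg : w ≠ g) (hwh : w ≠ h) :
    deg (contractEdge G g h) w = deg G w := by
  by_cases hadj : G.Adj w h
  · unfold deg
    rw [contract_neighborSet_of_adj hac hgh hwg hwh hadj]
    have hng : ¬ G.Adj w g := fun hc => no_triangle hac hgh hc.symm hadj.symm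
    have hgn : g ∉ G.neighborSet w \ {h} := fun hc => hng hc.1
    have hfin1 : (G.neighborSet w \ {h} : Set V).Finite := Set.toFinite _
    rw [Set.ncard_insert_of_notMem hgn hfin1]
    have hh : h ∈ G.neighborSet w := hadj
    rw [Set.ncard_diff_singleton_of_mem hh]
    have : 0 < (G.neighborSet w).ncard := (Set.ncard_pos (Set.toFinite _)).mpr ⟨h, hh⟩
    omega
  · unfold deg
    rw [contract_neighborSet_of_not_adj hac hgh hwg hwh hadj]

lemma contract_leaf_iff (hfin : Finite V) (hac : G.IsAcyclic)
    (hdeg3 : ∀ v ∈ G.support, ¬ IsLeaf G v → 3 ≤ deg G v)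
    (hgh : InternalEdge G g h) (w : V) :
    IsLeaf (contractEdge G g h) w ↔ IsLeaf G w := by
  by_cases hwh : w = h
  · have hn : (contractEdge G g h).neighborSet w = ∅ := by
      ext y
      simp only [mem_neighborSet, contract_adj, Set.mem_empty_iff_false, iff_false]
      rintro ⟨h1, h2, _⟩; exact h2 hwh
    constructor
    · intro hl
      exfalso
      rw [IsLeaf, deg, hn, Set.ncard_empty] at hl
      exact zero_ne_one hl
    · intro hl; exact absurd hl (hwh ▸ hgh.2.2)
  · by_cases hwg : w = g
    · constructor
      · intro hl
        exfalso
        have hsub : G.neighborSet w \ {h} ⊆ (contractEdge G g h).neighborSet w := by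
          intro y hy
          rcases hy with ⟨hy1, hy2⟩
          rw [Set.mem_singleton_iff] at hy2
          exact ⟨fun he => G.irrefl (he ▸ hy1), hwh, hy2, Or.inl hy1⟩
        have h3 : 3 ≤ (G.neighborSet w).ncard := by
          refine hdeg3 w ⟨h, ?_⟩ (hwg ▸ hgh.2.1)
          exact hwg ▸ hgh.1
        have hh : h ∈ G.neighborSet w := hwg ▸ hgh.1
        have h2 : 2 ≤ (G.neighborSet w \ {h}).ncard := by
          rw [Set.ncard_diff_singleton_of_mem hh]; omega
        have := Set.ncard_le_ncard hsub (Set.toFinite _)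
        rw [IsLeaf, deg] at hl
        omega
      · intro hl; exact absurd hl (hwg ▸ hgh.2.1)
    · rw [IsLeaf, IsLeaf, contract_deg_eq hfin hac hgh.1 hwg hwh]

end Contract
section Corr

variable {G : SimpleGraph V} {ψ : V → L} {g h : V}

noncomputable def cmap (g h : V) : V → V := fun w =>
  haveI := Classical.decEq V
  if w = h then g else w

lemma cmap_h : cmap g h h = g := by simp [cmap]

lemma cmap_ne {w : V} (hw : w ≠ h) : cmap g h w = w := by simp [cmap, hw]

lemma cAdj (hac : G.IsAcyclic) (hGH : G.Adj g h) {a b : V} (ha : G.Adj a b)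
    (hs : s(a,b) ≠ s(g,h)) : (contractEdge G g h).Adj (cmap g h a) (cmap g h b) := by
  by_cases hah : a = h
  · subst hah
    have hbg : b ≠ g := by
      intro hbg; subst hbg
      exact hs (by rw [Sym2.eq_iff]; exact Or.inr ⟨rfl, rfl⟩)
    have hbh : b ≠ a := ha.ne'
    rw [cmap_h, cmap_ne hbh]
    exact ⟨fun he => hbg he.symm, hGH.ne, hbh, Or.inr (Or.inl ⟨rfl, ha⟩)⟩
  · by_cases hbh : b = h
    · subst hbh
      have hag : a ≠ g := by
        intro hag; subst hag
        exact hs rfl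
      rw [cmap_h, cmap_ne hah]
      exact ⟨hag, hah, hGH.ne, Or.inr (Or.inr ⟨rfl, ha⟩)⟩
    · rw [cmap_ne hah, cmap_ne hbh]
      exact ⟨ha.ne, hah, hbh, Or.inl ha⟩

/-- Case 1 lift. -/
lemma case1_lift (hac : G.IsAcyclic) (hGH : G.Adj g h) {α β : V}
    (hα : α ≠ h) (hβ : β ≠ h) (hadjG : G.Adj α β) {w₁ w₂ : V}
    (hws : ((contractEdge G g h).deleteEdges {s(α,β)}).Reachable w₁ w₂) :
    (G.deleteEdges {s(α,β)}).Reachable w₁ w₂ := by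
  exact reach_lift (B := G.deleteEdges {s(α,β)}) (fun a b hab => by
      obtain ⟨hab', hne⟩ := deleteEdges_adj.mp hab
      rw [Set.mem_singleton_iff] at hne
      obtain ⟨hne1, hah, hbh, hor⟩ := hab'
      rcases hor with hG | ⟨rfl, hhb⟩ | ⟨rfl, hah'⟩
      · exact (del_adj hG hne).reachable
      · refine ((del_adj hGH ?_).reachable).trans (del_adj hhb ?_).reachable
        · intro hc
          rw [Sym2.eq_iff] at hc
          rcases hc with ⟨he1, he2⟩ | ⟨he1, he2⟩
          · exact hβ he2.symm
          · exact hα he2.symm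
        · intro hc
          rw [Sym2.eq_iff] at hc
          rcases hc with ⟨he1, he2⟩ | ⟨he1, he2⟩
          · exact hα he1.symm
          · exact hβ he1.symm
      · refine ((del_adj hah' ?_).reachable).trans (del_adj hGH.symm ?_).reachable
        · intro hc
          rw [Sym2.eq_iff] at hc
          rcases hc with ⟨he1, he2⟩ | ⟨he1, he2⟩
          · exact hβ he2.symm
          · exact hα he2.symm
        · intro hc
          rw [Sym2.eq_iff] at hc
          rcases hc with ⟨he1, he2⟩ | ⟨he1, he2⟩
          · exact hα he1.symm
          · exact hβ he1.symm
      ) hws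

/-- Case 1 map. -/
lemma case1_map (hac : G.IsAcyclic) (hGH : G.Adj g h) {α β : V}
    (hα : α ≠ h) (hβ : β ≠ h) (hadjG : G.Adj α β) {w₁ w₂ : V}
    (hws : (G.deleteEdges {s(α,β)}).Reachable w₁ w₂) :
    ((contractEdge G g h).deleteEdges {s(α,β)}).Reachable (cmap g h w₁) (cmap g h w₂) := by
  exact reach_map (B := (contractEdge G g h).deleteEdges {s(α,β)}) (cmap g h)
      (fun a b hab => by
      obtain ⟨hab', hne⟩ := deleteEdges_adj.mp hab
      rw [Set.mem_singleton_iff] at hne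
      by_cases hs : s(a,b) = s(g,h)
      · left
        rw [Sym2.eq_iff] at hs
        rcases hs with ⟨rfl, rfl⟩ | ⟨rfl, rfl⟩
        · rw [cmap_h, cmap_ne hab'.ne]
        · rw [cmap_h, cmap_ne hab'.ne']
      · right
        rw [deleteEdges_adj]
        refine ⟨cAdj hac hGH hab' hs, ?_⟩
        rw [Set.mem_singleton_iff]
        by_cases hah : a = h
        · subst hah
          rw [cmap_h, cmap_ne hab'.ne']
          intro hc
          have hadjgb : G.Adj g b := by
            rw [Sym2.eq_iff] at hc
            rcases hc with ⟨he1, he2⟩ | ⟨he1, he2⟩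
            · rw [he1, he2]; exact hadjG
            · rw [he1, he2]; exact hadjG.symm
          exact no_triangle hac hGH hadjgb hab'
        · by_cases hbh : b = h
          · subst hbh
            rw [cmap_ne hah, cmap_h]
            intro hc
            have hadjga : G.Adj g a := by
              rw [Sym2.eq_iff] at hc
              rcases hc with ⟨he1, he2⟩ | ⟨he1, he2⟩
              · rw [he2, he1]; exact hadjG.symm
              · rw [he2, he1]; exact hadjG
            exact no_triangle hac hGH hadjga hab'.symm
          · rw [cmap_ne hah, cmap_ne hbh]
            exact hne
      ) hws

/-- Case 1 side correspondence. -/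
lemma case1_side (hac : G.IsAcyclic) (hGH : G.Adj g h) {α β : V}
    (hα : α ≠ h) (hβ : β ≠ h) (hadjG : G.Adj α β) {w : V} (hw : w ≠ h) :
    w ∈ side (contractEdge G g h) α β ↔ w ∈ side G α β := by
  constructor
  · exact fun hws => case1_lift hac hGH hα hβ hadjG hws
  · intro hws
    have := case1_map hac hGH hα hβ hadjG (w₁ := w) (w₂ := α) hws
    rwa [cmap_ne hw, cmap_ne hα] at this

lemma sym2_gh_ne_hβ (hGH : G.Adj g h) {β : V} (hβg : β ≠ g) : s(g,h) ≠ s(h,β) := by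
  intro hc
  rw [Sym2.eq_iff] at hc
  rcases hc with ⟨he1, he2⟩ | ⟨he1, he2⟩
  · exact hGH.ne he1
  · exact hβg he1.symm

/-- Case 2 lift : `G₂`-edge `(g,β)` corresponds to `G`-edge `(h,β)`. -/
lemma case2_lift (hac : G.IsAcyclic) (hGH : G.Adj g h) {β : V}
    (hβh : β ≠ h) (hβg : β ≠ g) (hadjG : G.Adj h β) {w₁ w₂ : V}
    (hws : ((contractEdge G g h).deleteEdges {s(g,β)}).Reachable w₁ w₂) :
    (G.deleteEdges {s(h,β)}).Reachable w₁ w₂ := by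
  have hgh_ne : s(g,h) ≠ s(h,β) := sym2_gh_ne_hβ hGH hβg
  exact reach_lift (B := G.deleteEdges {s(h,β)}) (fun a b hab => by
        obtain ⟨hab', hne⟩ := deleteEdges_adj.mp hab
        rw [Set.mem_singleton_iff] at hne
        obtain ⟨hne1, hah, hbh, hor⟩ := hab'
        rcases hor with hG | ⟨rfl, hhb⟩ | ⟨rfl, hah'⟩
        · refine (del_adj hG ?_).reachable
          intro hc
          rw [Sym2.eq_iff] at hc
          rcases hc with ⟨he1, he2⟩ | ⟨he1, he2⟩
          · exact hah he1
          · exact hbh he2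
        · refine ((del_adj hGH hgh_ne).reachable).trans (del_adj hhb ?_).reachable
          intro hc
          rw [Sym2.eq_iff] at hc
          rcases hc with ⟨he1, he2⟩ | ⟨he1, he2⟩
          · exact hne (by rw [he2])
          · exact hbh he2
        · refine ((del_adj hah' ?_).reachable).trans (del_adj hGH.symm ?_).reachable
          · intro hc
            rw [Sym2.eq_iff] at hc
            rcases hc with ⟨he1, he2⟩ | ⟨he1, he2⟩
            · exact hah he1
            · exact hne (by rw [he1, Sym2.eq_swap])
          · intro hc
            rw [Sym2.eq_iff] at hc
            rcases hc with ⟨he1, he2⟩ | ⟨he1, he2⟩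
            · exact hβg he2.symm
            · exact hGH.ne he2
        ) hws

/-- Case 2 map. -/
lemma case2_map (hac : G.IsAcyclic) (hGH : G.Adj g h) {β : V}
    (hβh : β ≠ h) (hβg : β ≠ g) (hadjG : G.Adj h β) {w₁ w₂ : V}
    (hws : (G.deleteEdges {s(h,β)}).Reachable w₁ w₂) :
    ((contractEdge G g h).deleteEdges {s(g,β)}).Reachable (cmap g h w₁) (cmap g h w₂) := by
  exact reach_map (B := (contractEdge G g h).deleteEdges {s(g,β)}) (cmap g h)
      (fun a b hab => by
      obtain ⟨hab', hne⟩ := deleteEdges_adj.mp hab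
      rw [Set.mem_singleton_iff] at hne
      by_cases hs : s(a,b) = s(g,h)
      · left
        rw [Sym2.eq_iff] at hs
        rcases hs with ⟨rfl, rfl⟩ | ⟨rfl, rfl⟩
        · rw [cmap_h, cmap_ne hab'.ne]
        · rw [cmap_h, cmap_ne hab'.ne']
      · right
        rw [deleteEdges_adj]
        refine ⟨cAdj hac hGH hab' hs, ?_⟩
        rw [Set.mem_singleton_iff]
        by_cases hah : a = h
        · subst hah
          rw [cmap_h, cmap_ne hab'.ne']
          intro hc
          rw [Sym2.eq_iff] at hc
          rcases hc with ⟨he1, he2⟩ | ⟨he1, he2⟩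
          · exact hne (by rw [he2])
          · exact hβg he1.symm
        · by_cases hbh : b = h
          · subst hbh
            rw [cmap_ne hah, cmap_h]
            intro hc
            rw [Sym2.eq_iff] at hc
            rcases hc with ⟨he1, he2⟩ | ⟨he1, he2⟩
            · exact hβg he2.symm
            · exact hne (by rw [he1, Sym2.eq_swap])
          · rw [cmap_ne hah, cmap_ne hbh]
            intro hc
            rw [Sym2.eq_iff] at hc
            have hgb : G.Adj g β := by
              rcases hc with ⟨he1, he2⟩ | ⟨he1, he2⟩
              · rw [← he1, ← he2]; exact hab'
              · rw [← he1, ← he2]; exact hab'.symm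
            exact no_triangle hac hGH hgb hadjG
      ) hws

/-- Case 2 side correspondence, orientation 1. -/
lemma case2_side (hac : G.IsAcyclic) (hGH : G.Adj g h) {β : V}
    (hβh : β ≠ h) (hβg : β ≠ g) (hadjG : G.Adj h β) {w : V} (hw : w ≠ h) :
    w ∈ side (contractEdge G g h) g β ↔ w ∈ side G h β := by
  constructor
  · intro hws
    exact (case2_lift hac hGH hβh hβg hadjG hws).trans
      (del_adj hGH (sym2_gh_ne_hβ hGH hβg)).reachable
  · intro hws
    have := case2_map hac hGH hβh hβg hadjG (w₁ := w) (w₂ := h) hws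
    rwa [cmap_ne hw, cmap_h] at this

/-- Case 2 side correspondence, orientation 2. -/
lemma case2_side' (hac : G.IsAcyclic) (hGH : G.Adj g h) {β : V}
    (hβh : β ≠ h) (hβg : β ≠ g) (hadjG : G.Adj h β) {w : V} (hw : w ≠ h) :
    w ∈ side (contractEdge G g h) β g ↔ w ∈ side G β h := by
  have e1 : ({s(β, g)} : Set (Sym2 V)) = {s(g, β)} := by rw [Sym2.eq_swap]
  have e2 : ({s(β, h)} : Set (Sym2 V)) = {s(h, β)} := by rw [Sym2.eq_swap]
  constructor
  · intro hws
    have hws' : ((contractEdge G g h).deleteEdges {s(g,β)}).Reachable w β := by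
      rw [← e1]; exact hws
    have := case2_lift hac hGH hβh hβg hadjG hws'
    show (G.deleteEdges {s(β,h)}).Reachable w β
    rw [e2]; exact this
  · intro hws
    have hws' : (G.deleteEdges {s(h,β)}).Reachable w β := by
      rw [← e2]; exact hws
    have := case2_map hac hGH hβh hβg hadjG (w₁ := w) (w₂ := β) hws'
    rw [cmap_ne hw, cmap_ne hβh] at this
    show ((contractEdge G g h).deleteEdges {s(β,g)}).Reachable w β
    rw [e1]; exact this

end Corr
section CL

variable {G : SimpleGraph V} {ψ : V → L} {g h : V}

lemma contract_sideLabels_eq (hfin : Finite V) (hac : G.IsAcyclic)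
    (hdeg3 : ∀ v ∈ G.support, ¬ IsLeaf G v → 3 ≤ deg G v) (hgh : InternalEdge G g h)
    {α β α' β' : V}
    (hiff : ∀ w, IsLeaf G w → (w ∈ side (contractEdge G g h) α β ↔ w ∈ side G α' β')) :
    sideLabels (contractEdge G g h) ψ α β = sideLabels G ψ α' β' := by
  ext m
  constructor
  · rintro ⟨w, hl, hs, rfl⟩
    have hlG := (contract_leaf_iff hfin hac hdeg3 hgh w).mp hl
    exact ⟨w, hlG, (hiff w hlG).mp hs, rfl⟩
  · rintro ⟨w, hl, hs, rfl⟩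
    exact ⟨w, (contract_leaf_iff hfin hac hdeg3 hgh w).mpr hl, (hiff w hl).mpr hs, rfl⟩

lemma leaf_ne_h (hgh : InternalEdge G g h) {w : V} (hl : IsLeaf G w) : w ≠ h :=
  fun he => hgh.2.2 (he ▸ hl)

lemma case1_mside (hfin : Finite V) (hac : G.IsAcyclic)
    (hdeg3 : ∀ v ∈ G.support, ¬ IsLeaf G v → 3 ≤ deg G v) (hgh : InternalEdge G g h)
    {α β : V} (hα : α ≠ h) (hβ : β ≠ h) (hadjG : G.Adj α β) :
    Mside (contractEdge G g h) ψ α β = Mside G ψ α β := by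
  unfold Mside
  rw [contract_sideLabels_eq hfin hac hdeg3 hgh
      (fun w hl => case1_side hac hgh.1 hα hβ hadjG (leaf_ne_h hgh hl)),
    contract_sideLabels_eq hfin hac hdeg3 hgh
      (fun w hl => case1_side hac hgh.1 hβ hα hadjG.symm (leaf_ne_h hgh hl))]

lemma case2_mside (hfin : Finite V) (hac : G.IsAcyclic)
    (hdeg3 : ∀ v ∈ G.support, ¬ IsLeaf G v → 3 ≤ deg G v) (hgh : InternalEdge G g h)
    {β : V} (hβh : β ≠ h) (hβg : β ≠ g) (hadjG : G.Adj h β) :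
    Mside (contractEdge G g h) ψ g β = Mside G ψ h β ∧
    Mside (contractEdge G g h) ψ β g = Mside G ψ β h := by
  constructor
  · unfold Mside
    rw [contract_sideLabels_eq hfin hac hdeg3 hgh
        (fun w hl => case2_side hac hgh.1 hβh hβg hadjG (leaf_ne_h hgh hl)),
      contract_sideLabels_eq hfin hac hdeg3 hgh
        (fun w hl => case2_side' hac hgh.1 hβh hβg hadjG (leaf_ne_h hgh hl))]
  · unfold Mside
    rw [contract_sideLabels_eq hfin hac hdeg3 hgh
        (fun w hl => case2_side' hac hgh.1 hβh hβg hadjG (leaf_ne_h hgh hl)),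
      contract_sideLabels_eq hfin hac hdeg3 hgh
        (fun w hl => case2_side hac hgh.1 hβh hβg hadjG (leaf_ne_h hgh hl))]

lemma resolves_of_msides {V₂ : Type} {G1 : SimpleGraph V} {G2 : SimpleGraph V₂}
    {ψ1 : V → L} {ψ2 : V₂ → L} {a b : V} {a' b' : V₂}
    (hadj' : G2.Adj a' b') (hm1 : Mside G1 ψ1 a b = Mside G2 ψ2 a' b')
    (hm2 : Mside G1 ψ1 b a = Mside G2 ψ2 b' a') {κ : Quartet L}
    (hres : Resolves G1 ψ1 a b κ) : Resolves G2 ψ2 a' b' κ := by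
  obtain ⟨-, m1, m2, n1, n2, hm12, hn12, q1, q2, q3, q4, hκ⟩ := hres
  exact ⟨hadj', m1, m2, n1, n2, hm12, hn12, hm1 ▸ q1, hm1 ▸ q2, hm2 ▸ q3, hm2 ▸ q4, hκ⟩

lemma resolves_flip {a b : V} {κ : Quartet L} (hres : Resolves G ψ a b κ) :
    Resolves G ψ b a κ := by
  obtain ⟨hadj, m1, m2, n1, n2, hm12, hn12, q1, q2, q3, q4, hκ⟩ := hres
  exact ⟨hadj.symm, n1, n2, m1, m2, hn12, hm12, q3, q4, q1, q2, by rw [hκ, Sym2.eq_swap]⟩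

lemma contract_info (hfin : Finite V) (hac : G.IsAcyclic)
    (hdeg3 : ∀ v ∈ G.support, ¬ IsLeaf G v → 3 ≤ deg G v) (hgh : InternalEdge G g h) :
    infoContent (contractEdge G g h) ψ =
      {κ | ∃ y z, s(y,z) ≠ s(g,h) ∧ Resolves G ψ y z κ} := by
  ext κ
  constructor
  · rintro ⟨α, β, hres⟩
    obtain ⟨hne1, hαh, hβh, hor⟩ := hres.1
    rcases hor with hG | ⟨hag, hhb⟩ | ⟨hbg, hah⟩
    · refine ⟨α, β, ?_, ?_⟩
      · intro hc
        rw [Sym2.eq_iff] at hc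
        rcases hc with ⟨he1, he2⟩ | ⟨he1, he2⟩
        · exact hβh he2
        · exact hαh he1
      · exact resolves_of_msides hG (case1_mside hfin hac hdeg3 hgh hαh hβh hG)
          (case1_mside hfin hac hdeg3 hgh hβh hαh hG.symm) hres
    · subst hag
      have hβg : β ≠ α := fun he => hne1 he.symm
      refine ⟨h, β, ?_, ?_⟩
      · intro hc
        rw [Sym2.eq_iff] at hc
        rcases hc with ⟨he1, he2⟩ | ⟨he1, he2⟩
        · exact hgh.1.ne he1.symm
        · exact hβg he2
      · exact resolves_of_msides hhb
          ((case2_mside hfin hac hdeg3 hgh hβh hβg hhb).1)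
          ((case2_mside hfin hac hdeg3 hgh hβh hβg hhb).2) hres
    · subst hbg
      have hαg : α ≠ β := hne1
      refine ⟨α, h, ?_, ?_⟩
      · intro hc
        rw [Sym2.eq_iff] at hc
        rcases hc with ⟨he1, he2⟩ | ⟨he1, he2⟩
        · exact hαg he1
        · exact hαh he1
      · exact resolves_of_msides hah
          ((case2_mside hfin hac hdeg3 hgh hαh hαg hah.symm).2)
          ((case2_mside hfin hac hdeg3 hgh hαh hαg hah.symm).1) hres
  · rintro ⟨y, z, hne, hres⟩
    have hadjG := hres.1
    by_cases hyh : y = h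
    · subst hyh
      have hzg : z ≠ g := by
        intro he; subst he
        exact hne (by rw [Sym2.eq_swap])
      have hzh : z ≠ y := hadjG.ne'
      have hadj₂ : (contractEdge G g y).Adj g z :=
        ⟨fun he => hzg he.symm, hgh.1.ne, hzh, Or.inr (Or.inl ⟨rfl, hadjG⟩)⟩
      exact ⟨g, z, resolves_of_msides hadj₂
        ((case2_mside hfin hac hdeg3 hgh hzh hzg hadjG).1).symm
        ((case2_mside hfin hac hdeg3 hgh hzh hzg hadjG).2).symm hres⟩
    · by_cases hzh : z = h
      · subst hzh
        have hyg : y ≠ g := by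
          intro he; subst he
          exact hne rfl
        have hadj₂ : (contractEdge G g z).Adj y g :=
          ⟨hyg, hyh, hgh.1.ne, Or.inr (Or.inr ⟨rfl, hadjG⟩)⟩
        exact ⟨y, g, resolves_of_msides hadj₂
          ((case2_mside hfin hac hdeg3 hgh hyh hyg hadjG.symm).2).symm
          ((case2_mside hfin hac hdeg3 hgh hyh hyg hadjG.symm).1).symm hres⟩
      · have hadj₂ : (contractEdge G g h).Adj y z := ⟨hadjG.ne, hyh, hzh, Or.inl hadjG⟩
        exact ⟨y, z, resolves_of_msides hadj₂
          (case1_mside hfin hac hdeg3 hgh hyh hzh hadjG).symm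
          (case1_mside hfin hac hdeg3 hgh hzh hyh hadjG.symm).symm hres⟩

/-- KEY LEMMA: in a maximally reduced tree, every internal edge has an
exclusively resolved quartet. -/
lemma exclusive_quartet (hfin : Finite V) (hac : G.IsAcyclic)
    (hdeg3 : ∀ v ∈ G.support, ¬ IsLeaf G v → 3 ≤ deg G v)
    (hmr : MaximallyReduced G ψ) (hgh : InternalEdge G g h) :
    ∃ a b c d : L, a ≠ b ∧ c ≠ d ∧ a ∈ Mside G ψ g h ∧ b ∈ Mside G ψ g h ∧
      c ∈ Mside G ψ h g ∧ d ∈ Mside G ψ h g ∧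
      ∀ y z : V, s(y,z) ≠ s(g,h) → ¬ Resolves G ψ y z (s(s(a,b),s(c,d))) := by
  by_contra hno
  push_neg at hno
  refine hmr.2 g h ⟨hgh, ?_⟩
  rw [contract_info hfin hac hdeg3 hgh]
  ext κ
  constructor
  · rintro ⟨y, z, hne, hres⟩
    exact ⟨y, z, hres⟩
  · rintro ⟨y, z, hres⟩
    by_cases hyz : s(y,z) = s(g,h)
    · have hresgh : Resolves G ψ g h κ := by
        rw [Sym2.eq_iff] at hyz
        rcases hyz with ⟨he1, he2⟩ | ⟨he1, he2⟩
        · rw [← he1, ← he2]; exact hres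
        · rw [← he2, ← he1]; exact resolves_flip hres
      obtain ⟨hadj, a, b, c, d, hab, hcd, ha, hb, hc, hd, hκ⟩ := hresgh
      obtain ⟨y', z', hne', hres'⟩ := hno a b c d hab hcd ha hb hc hd
      exact ⟨y', z', hne', hκ ▸ hres'⟩
    · exact ⟨y, z, hyz, hres⟩

end CL
section Helpers

variable {G : SimpleGraph V} {ψ : V → L}

lemma adj_support {a b : V} (h : G.Adj a b) : a ∈ G.support := ⟨b, h⟩

lemma sym2_ne_symm {a b c d : V} (h : s(a,b) ≠ s(c,d)) : s(b,a) ≠ s(d,c) := by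
  rw [Sym2.eq_swap, show s(d,c) = s(c,d) from Sym2.eq_swap]
  exact h

lemma internal_symm {a b : V} (h : InternalEdge G a b) : InternalEdge G b a :=
  ⟨h.1.symm, h.2.2, h.2.1⟩

lemma reach_del_of_walk {e : Sym2 V} {a b : V} (W : G.Walk a b) (h : e ∉ W.edges) :
    (G.deleteEdges {e}).Reachable a b := by
  refine (W.toDeleteEdges {e} ?_).reachable
  intro e' he' hc
  rw [Set.mem_singleton_iff] at hc
  exact h (hc ▸ he')

/-- A vertex with two distinct neighbours is not a leaf. -/
lemma not_leaf_of_two {t w₁ w₂ : V} (h1 : G.Adj t w₁) (h2 : G.Adj t w₂) (hne : w₁ ≠ w₂) :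
    ¬ IsLeaf G t := by
  intro hl
  obtain ⟨w0, hw0⟩ := Set.ncard_eq_one.mp hl
  have e1 : w₁ ∈ G.neighborSet t := h1
  have e2 : w₂ ∈ G.neighborSet t := h2
  rw [hw0, Set.mem_singleton_iff] at e1 e2
  exact hne (e1.trans e2.symm)

end Helpers
/-- Let `T, T'` be maximally reduced with `I(T) = I(T')` and let `φ`
be a bijection between their internal edges such that corresponding edges have
equal `M`-sets on corresponding sides. If `(u,v)` and `(v,x)` are adjacent
internal edges of `T`, and `(p,q) = φ(u,v)`, `(r,s') = φ(v,x)` are oriented so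
that `M_u^{uv} = M_p^{pq}` and `M_v^{vx} = M_r^{rs'}`, then `q = r`: the image
edges are adjacent in `T'`, sharing the endpoint corresponding to `v`. -/
theorem stmt13 (T : MulTree V L) (T' : MulTree V' L)
    (hT : MaximallyReduced T.G T.ψ) (hT' : MaximallyReduced T'.G T'.ψ)
    (hinfo : infoContent T.G T.ψ = infoContent T'.G T'.ψ)
    (φ : internalEdgeSet T.G ≃ internalEdgeSet T'.G)
    (hφ : ∀ (a b : V) (h : InternalEdge T.G a b),
      ∃ a' b' : V', InternalEdge T'.G a' b' ∧
        (φ ⟨s(a, b), ⟨a, b, rfl, h⟩⟩).1 = s(a', b') ∧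
        Mside T.G T.ψ a b = Mside T'.G T'.ψ a' b' ∧
        Mside T.G T.ψ b a = Mside T'.G T'.ψ b' a')
    (u v x : V) (hux : u ≠ x)
    (h1 : InternalEdge T.G u v) (h2 : InternalEdge T.G v x)
    (p q r s' : V')
    (hpq : (φ ⟨s(u, v), ⟨u, v, rfl, h1⟩⟩).1 = s(p, q))
    (hrs : (φ ⟨s(v, x), ⟨v, x, rfl, h2⟩⟩).1 = s(r, s'))
    (hM1 : Mside T.G T.ψ u v = Mside T'.G T'.ψ p q)
    (hM2 : Mside T.G T.ψ v x = Mside T'.G T'.ψ r s') :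
    q = r ∧ T'.G.Adj p q ∧ T'.G.Adj r s' := by
  classical
  have hac := T.acyclic
  have hac' := T'.acyclic
  have hvu : T.G.Adj u v := h1.1
  have hvx : T.G.Adj v x := h2.1
  have hne_uv_vx : s(u,v) ≠ s(v,x) := by
    intro hc
    rw [Sym2.eq_iff] at hc
    rcases hc with ⟨he1, he2⟩ | ⟨he1, he2⟩
    · exact hvu.ne he1
    · exact hux he1
  -- exclusive quartets for (u,v) and (v,x)
  obtain ⟨a₁, a₂, b₁, b₂, ha12, hb12, ha1, ha2, hb1, hb2, hexcl1⟩ :=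
    exclusive_quartet T.fin T.acyclic T.internal3 hT h1
  obtain ⟨c₁, c₂, d₁, d₂, hc12, hd12, hc1, hc2, hd1, hd2, hexcl2⟩ :=
    exclusive_quartet T.fin T.acyclic T.internal3 hT h2
  -- orientation fixing for (p,q)
  obtain ⟨a', b', hint', heq', hMa', hMb'⟩ := hφ u v h1
  have hE := heq'.symm.trans hpq
  rw [Sym2.eq_iff] at hE
  have hmain1 : InternalEdge T'.G p q ∧ Mside T.G T.ψ v u = Mside T'.G T'.ψ q p := by
    rcases hE with ⟨he1, he2⟩ | ⟨he1, he2⟩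
    · subst he1; subst he2
      exact ⟨hint', hMb'⟩
    · subst he1; subst he2
      exfalso
      have hMeq : Mside T.G T.ψ v u = Mside T.G T.ψ u v := by
        rw [hMb', ← hM1]
      have ha1' : a₁ ∈ Mside T.G T.ψ v u := by rw [hMeq]; exact ha1
      exact mside_disjoint ha1 ha1'
  obtain ⟨hintpq, hMB⟩ := hmain1
  -- orientation fixing for (r,s')
  obtain ⟨a'', b'', hint'', heq'', hMa'', hMb''⟩ := hφ v x h2
  have hE2 := heq''.symm.trans hrs
  rw [Sym2.eq_iff] at hE2
  have hmain2 : InternalEdge T'.G r s' ∧ Mside T.G T.ψ x v = Mside T'.G T'.ψ s' r := by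
    rcases hE2 with ⟨he1, he2⟩ | ⟨he1, he2⟩
    · subst he1; subst he2
      exact ⟨hint'', hMb''⟩
    · subst he1; subst he2
      exfalso
      have hMeq : Mside T.G T.ψ x v = Mside T.G T.ψ v x := by
        rw [hMb'', ← hM2]
      have hc1' : c₁ ∈ Mside T.G T.ψ x v := by rw [hMeq]; exact hc1
      exact mside_disjoint hc1' hc1
  obtain ⟨hintrs, hMD⟩ := hmain2
  by_cases hqr : q = r
  · exact ⟨hqr, hintpq.1, hintrs.1⟩
  exfalso
  -- T-side geometric facts
  have hu_vx : u ∈ side T.G v x := (del_adj hvu hne_uv_vx).reachable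
  have hx_vu : x ∈ side T.G v u := by
    refine (del_adj hvx.symm ?_).reachable
    intro hc
    rw [Sym2.eq_iff] at hc
    rcases hc with ⟨he1, he2⟩ | ⟨he1, he2⟩
    · exact hvx.ne' he1
    · exact hux he1.symm
  have hSuv_vx : side T.G u v ⊆ side T.G v x :=
    side_subset_side hu_vx (fun hc => sides_disjoint hac hvu hc hx_vu)
  have hSxv_vu : side T.G x v ⊆ side T.G v u :=
    side_subset_side hx_vu (fun hc => sides_disjoint hac hvx hu_vx hc)
  have hAC : Mside T.G T.ψ u v ⊆ Mside T.G T.ψ v x := mside_mono hSuv_vx hSxv_vu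
  have hDB : Mside T.G T.ψ x v ⊆ Mside T.G T.ψ v u := mside_mono hSxv_vu hSuv_vx
  -- T' edge distinctness
  have hne_pq_rs : s(p,q) ≠ s(r,s') := by
    intro hc
    apply hne_uv_vx
    have h6 : (⟨s(u,v), ⟨u,v,rfl,h1⟩⟩ : internalEdgeSet T.G) = ⟨s(v,x), ⟨v,x,rfl,h2⟩⟩ :=
      φ.injective (Subtype.ext (hpq.trans (hc.trans hrs.symm)))
    exact congrArg Subtype.val h6
  have hq_sup : q ∈ T'.G.support := adj_support hintpq.1.symm
  have hp_sup : p ∈ T'.G.support := adj_support hintpq.1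
  have hr_sup : r ∈ T'.G.support := adj_support hintrs.1
  have hs'_sup : s' ∈ T'.G.support := adj_support hintrs.1.symm
  -- POS part 1 : q ∈ side r s'
  have hq_rs : q ∈ side T'.G r s' := by
    by_contra hqn
    have hq_sr : q ∈ side T'.G s' r :=
      (side_partition (T'.conn q hq_sup r hr_sup) hintrs.1).resolve_left hqn
    have hp_sr : p ∈ side T'.G s' r := by
      refine side_adj hintpq.1.symm ?_ hq_sr
      rw [show s(q,p) = s(p,q) from Sym2.eq_swap, show s(s',r) = s(r,s') from Sym2.eq_swap]
      exact hne_pq_rs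
    rcases side_partition (T'.conn r hr_sup p hp_sup) hintpq.1 with hr_pq | hr_qp
    · -- r ∈ side p q : derive B ⊆ D, contradiction with κ₁
      have hStep1 : side T'.G q p ⊆ side T'.G s' r :=
        side_subset_side hq_sr (fun hc => sides_disjoint hac' hintpq.1 hr_pq hc)
      have hStep2 : side T'.G r s' ⊆ side T'.G p q :=
        side_subset_side hr_pq (fun hc => sides_disjoint hac' hintrs.1 hc hq_sr)
      have hBD : Mside T'.G T'.ψ q p ⊆ Mside T'.G T'.ψ s' r := mside_mono hStep1 hStep2
      have hres : Resolves T.G T.ψ v x (s(s(a₁,a₂),s(b₁,b₂))) := by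
        refine ⟨hvx, a₁, a₂, b₁, b₂, ha12, hb12, hAC ha1, hAC ha2, ?_, ?_, rfl⟩
        · rw [hMD]; exact hBD (hMB ▸ hb1)
        · rw [hMD]; exact hBD (hMB ▸ hb2)
      exact hexcl1 v x hne_uv_vx.symm hres
    · -- r ∈ side q p : label contradiction with a₁
      have hStep : side T'.G p q ⊆ side T'.G s' r :=
        side_subset_side hp_sr (fun hc => sides_disjoint hac' hintpq.1 hc hr_qp)
      have ha1pq : a₁ ∈ Mside T'.G T'.ψ p q := hM1 ▸ ha1
      obtain ⟨⟨ℓ, hℓleaf, hℓside, hℓlab⟩, -⟩ := ha1pq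
      have ha1rs : a₁ ∈ Mside T'.G T'.ψ r s' := hM2 ▸ (hAC ha1)
      exact ha1rs.2 ⟨ℓ, hℓleaf, hStep hℓside, hℓlab⟩
  -- POS part 2 : r ∈ side q p
  have hr_qp : r ∈ side T'.G q p := by
    by_contra hrn
    have hr_pq : r ∈ side T'.G p q := by
      rcases side_partition (T'.conn r hr_sup p hp_sup) hintpq.1 with h | h
      · exact h
      · exact absurd h hrn
    have hs'_pq : s' ∈ side T'.G p q := by
      refine side_adj hintrs.1 hne_pq_rs.symm hr_pq
    have hStep1 : side T'.G s' r ⊆ side T'.G p q :=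
      side_subset_side hs'_pq (fun hc => sides_disjoint hac' hintrs.1 hq_rs hc)
    have hStep2 : side T'.G q p ⊆ side T'.G r s' :=
      side_subset_side hq_rs (fun hc => sides_disjoint hac' hintpq.1 hs'_pq hc)
    have hDA : Mside T'.G T'.ψ s' r ⊆ Mside T'.G T'.ψ p q := mside_mono hStep1 hStep2
    have hd1uv : d₁ ∈ Mside T.G T.ψ u v := by
      rw [hM1]; exact hDA (hMD ▸ hd1)
    exact mside_disjoint hd1uv (hDB hd1)
  -- the path from q to r and its first edge (q,t)
  obtain ⟨W0⟩ := T'.conn q hq_sup r hr_sup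
  obtain ⟨W, hWpath⟩ := W0.toPath
  cases W with
  | nil => exact hqr rfl
  | @cons _ t _ hqt Wt =>
    rw [Walk.cons_isPath_iff] at hWpath
    obtain ⟨hWtpath, hq_not_Wt⟩ := hWpath
    have hqt_not_Wt : s(q,t) ∉ Wt.edges := by
      intro hc
      exact hq_not_Wt (Wt.fst_mem_support_of_mem_edges hc)
    have ht_ne_p : t ≠ p := by
      intro htp
      have hpq_not : s(p,q) ∉ Wt.edges := by
        intro hc
        exact hq_not_Wt (Wt.snd_mem_support_of_mem_edges hc)
      have hreach : (T'.G.deleteEdges {s(p,q)}).Reachable r t := by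
        refine reach_del_of_walk Wt.reverse ?_
        rw [Walk.edges_reverse, List.mem_reverse]
        exact hpq_not
      have hreach' : r ∈ side T'.G p q := htp ▸ hreach
      exact sides_disjoint hac' hintpq.1 hreach' hr_qp
    have ht_qp : t ∈ side T'.G q p := by
      refine (del_adj hqt.symm ?_).reachable
      intro hc
      rw [Sym2.eq_iff] at hc
      rcases hc with ⟨he1, he2⟩ | ⟨he1, he2⟩
      · exact hqt.ne he1.symm
      · exact ht_ne_p he1
    have hp_qt : p ∈ side T'.G q t := by
      refine (del_adj hintpq.1 ?_).reachable
      intro hc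
      rw [Sym2.eq_iff] at hc
      rcases hc with ⟨he1, he2⟩ | ⟨he1, he2⟩
      · exact hintpq.1.ne he1
      · exact ht_ne_p he1.symm
    have hq_ne_s' : q ≠ s' := by
      rintro rfl
      have hb := (isAcyclic_iff_forall_adj_isBridge.mp hac') hintrs.1
      rw [isBridge_iff] at hb
      exact hb hq_rs.symm
    have hs'_tq : s' ∈ side T'.G t q := by
      have hswap : ({s(t,q)} : Set (Sym2 V')) = {s(q,t)} := by rw [Sym2.eq_swap]
      show (T'.G.deleteEdges {s(t,q)}).Reachable s' t
      rw [hswap]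
      have hstep1 : (T'.G.deleteEdges {s(q,t)}).Reachable s' r := by
        refine (del_adj hintrs.1.symm ?_).reachable
        intro hc
        rw [Sym2.eq_iff] at hc
        rcases hc with ⟨he1, he2⟩ | ⟨he1, he2⟩
        · exact hq_ne_s' he1.symm
        · exact hqr he2.symm
      have hstep2 : (T'.G.deleteEdges {s(q,t)}).Reachable r t := by
        refine reach_del_of_walk Wt.reverse ?_
        rw [Walk.edges_reverse, List.mem_reverse]
        exact hqt_not_Wt
      exact hstep1.trans hstep2
    -- side inclusions in T'
    have hS1 : side T'.G p q ⊆ side T'.G q t :=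
      side_subset_side hp_qt (fun hc => sides_disjoint hac' hintpq.1 hc ht_qp)
    have hS2 : side T'.G t q ⊆ side T'.G q p :=
      side_subset_side ht_qp (fun hc => sides_disjoint hac' hqt hp_qt hc)
    have hS3 : side T'.G q t ⊆ side T'.G r s' :=
      side_subset_side hq_rs (fun hc => sides_disjoint hac' hqt hc hs'_tq)
    have hS4 : side T'.G s' r ⊆ side T'.G t q :=
      side_subset_side hs'_tq (fun hc => sides_disjoint hac' hintrs.1 hq_rs hc)
    have hA1 : Mside T'.G T'.ψ p q ⊆ Mside T'.G T'.ψ q t := mside_mono hS1 hS2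
    have hD1B : Mside T'.G T'.ψ t q ⊆ Mside T'.G T'.ψ q p := mside_mono hS2 hS1
    have hA1C : Mside T'.G T'.ψ q t ⊆ Mside T'.G T'.ψ r s' := mside_mono hS3 hS4
    have hDD1 : Mside T'.G T'.ψ s' r ⊆ Mside T'.G T'.ψ t q := mside_mono hS4 hS3
    -- (q,t) is an internal edge of T'
    have ht_not_leaf : ¬ IsLeaf T'.G t := by
      cases Wt with
      | nil => exact hintrs.2.1
      | @cons _ t₂ _ hadj2 W2 =>
        refine not_leaf_of_two hqt.symm hadj2 ?_
        intro he
        apply hq_not_Wt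
        rw [Walk.support_cons]
        exact List.mem_cons_of_mem _ (he ▸ W2.start_mem_support)
    have hint_qt : InternalEdge T'.G q t := ⟨hqt, hintpq.2.2, ht_not_leaf⟩
    -- pull the edge (q,t) back to T
    obtain ⟨y₀, z₀, he0, hint0⟩ := (φ.symm ⟨s(q,t), ⟨q, t, rfl, hint_qt⟩⟩).2
    have h5 : (φ ⟨s(y₀,z₀), ⟨y₀, z₀, rfl, hint0⟩⟩).1 = s(q,t) := by
      have he : (⟨s(y₀,z₀), ⟨y₀,z₀,rfl,hint0⟩⟩ : internalEdgeSet T.G) =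
          φ.symm ⟨s(q,t), ⟨q, t, rfl, hint_qt⟩⟩ := Subtype.ext he0.symm
      rw [he, Equiv.apply_symm_apply]
    obtain ⟨a₃, b₃, hint₃, heq₃, hMa₃, hMb₃⟩ := hφ y₀ z₀ hint0
    have hE3 := heq₃.symm.trans h5
    rw [Sym2.eq_iff] at hE3
    have key : ∃ y z : V, InternalEdge T.G y z ∧ s(y,z) = s(y₀,z₀) ∧
        Mside T.G T.ψ y z = Mside T'.G T'.ψ q t ∧
        Mside T.G T.ψ z y = Mside T'.G T'.ψ t q := by
      rcases hE3 with ⟨he1, he2⟩ | ⟨he1, he2⟩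
      · exact ⟨y₀, z₀, hint0, rfl, by rw [hMa₃, he1, he2], by rw [hMb₃, he2, he1]⟩
      · exact ⟨z₀, y₀, internal_symm hint0, Sym2.eq_swap,
          by rw [hMb₃, he2, he1], by rw [hMa₃, he1, he2]⟩
    obtain ⟨y, z, hintyz, hsyz, hMy, hMz⟩ := key
    have hyzuv : s(y,z) ≠ s(u,v) := by
      intro hc
      have hcc : s(y₀,z₀) = s(u,v) := hsyz.symm.trans hc
      have hqtpq : s(q,t) = s(p,q) := by
        rw [← h5, ← hpq]
        exact congrArg (fun e => (φ e).1) (Subtype.ext hcc)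
      rw [Sym2.eq_iff] at hqtpq
      rcases hqtpq with ⟨he1, he2⟩ | ⟨he1, he2⟩
      · exact hqt.ne he2.symm
      · exact ht_ne_p he2
    have hyzvx : s(y,z) ≠ s(v,x) := by
      intro hc
      have hcc : s(y₀,z₀) = s(v,x) := hsyz.symm.trans hc
      have hqtrs : s(q,t) = s(r,s') := by
        rw [← h5, ← hrs]
        exact congrArg (fun e => (φ e).1) (Subtype.ext hcc)
      rw [Sym2.eq_iff] at hqtrs
      rcases hqtrs with ⟨he1, he2⟩ | ⟨he1, he2⟩
      · exact hqr he1
      · exact hq_ne_s' he1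
    -- memberships of the witness labels
    have ha1_yz : a₁ ∈ Mside T.G T.ψ y z := by
      rw [hMy]; exact hA1 (hM1 ▸ ha1)
    have hd1_zy : d₁ ∈ Mside T.G T.ψ z y := by
      rw [hMz]; exact hDD1 (hMD ▸ hd1)
    have hb_d1 : d₁ ∈ Mside T.G T.ψ v u := hDB hd1
    obtain ⟨⟨ℓa, hℓa_leaf, hℓa_uv, hℓa_lab⟩, -⟩ := ha1
    obtain ⟨⟨ℓd, hℓd_leaf, hℓd_xv, hℓd_lab⟩, -⟩ := hd1
    have hy_sup : y ∈ T.G.support := adj_support hintyz.1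
    have hz_sup : z ∈ T.G.support := adj_support hintyz.1.symm
    have hv_sup : v ∈ T.G.support := adj_support hvx
    have hℓa_yz : ℓa ∈ side T.G y z := by
      rcases side_partition (T.conn ℓa (leaf_mem_support hℓa_leaf) y hy_sup) hintyz.1 with h | h
      · exact h
      · exact absurd ⟨ℓa, hℓa_leaf, h, hℓa_lab⟩ ha1_yz.2
    have hℓd_zy : ℓd ∈ side T.G z y := by
      rcases side_partition (T.conn ℓd (leaf_mem_support hℓd_leaf) z hz_sup)
          hintyz.1.symm with h | h
      · exact h
      · exact absurd ⟨ℓd, hℓd_leaf, h, hℓd_lab⟩ hd1_zy.2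
    have hℓd_vu : ℓd ∈ side T.G v u := by
      rcases side_partition (T.conn ℓd (leaf_mem_support hℓd_leaf) v hv_sup)
          hvu.symm with h | h
      · exact h
      · exact absurd ⟨ℓd, hℓd_leaf, h, hℓd_lab⟩ hb_d1.2
    -- exclusive quartet of (y,z)
    obtain ⟨m₁, m₂, n₁, n₂, hm12, hn12, hm1, hm2, hn1, hn2, hexcl3⟩ :=
      exclusive_quartet T.fin T.acyclic T.internal3 hT hintyz
    rcases side_partition (T.conn v hv_sup y hy_sup) hintyz.1 with hv_yz | hv_zy
    · -- v ∈ side y z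
      have hx_yz : x ∈ side T.G y z :=
        side_adj hvx (fun hc => hyzvx hc.symm) hv_yz
      rcases side_partition (T.conn z hz_sup x (adj_support hvx.symm)) hvx.symm
          with hz_xv | hz_vx
      · -- case β
        have hSzy_xv : side T.G z y ⊆ side T.G x v :=
          side_subset_side hz_xv (fun hc => sides_disjoint hac hintyz.1 hv_yz hc)
        have hSvx_yz : side T.G v x ⊆ side T.G y z :=
          side_subset_side hv_yz (fun hc => sides_disjoint hac hvx hc hz_xv)
        have hMzy_xv : Mside T.G T.ψ z y ⊆ Mside T.G T.ψ x v := mside_mono hSzy_xv hSvx_yz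
        have hres : Resolves T.G T.ψ v x (s(s(m₁,m₂),s(n₁,n₂))) := by
          refine ⟨hvx, m₁, m₂, n₁, n₂, hm12, hn12, ?_, ?_, hMzy_xv hn1, hMzy_xv hn2, rfl⟩
          · rw [hM2]; exact hA1C (hMy ▸ hm1)
          · rw [hM2]; exact hA1C (hMy ▸ hm2)
        exact hexcl3 v x hyzvx.symm hres
      · -- impossible: ℓd on both sides of (v,x)
        have hSzy_vx : side T.G z y ⊆ side T.G v x :=
          side_subset_side hz_vx (fun hc => sides_disjoint hac hintyz.1 hx_yz hc)
        exact sides_disjoint hac hvx (hSzy_vx hℓd_zy) hℓd_xv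
    · -- v ∈ side z y
      have hu_zy : u ∈ side T.G z y := by
        refine side_adj hvu.symm ?_ hv_zy
        intro hc
        rw [Sym2.eq_swap, show s(z,y) = s(y,z) from Sym2.eq_swap] at hc
        exact hyzuv hc.symm
      rcases side_partition (T.conn y hy_sup u (adj_support hvu)) hvu with hy_uv | hy_vu
      · -- case α
        have hSyz_uv : side T.G y z ⊆ side T.G u v :=
          side_subset_side hy_uv (fun hc => sides_disjoint hac hintyz.1 hc hv_zy)
        have hSvu_zy : side T.G v u ⊆ side T.G z y :=
          side_subset_side hv_zy (fun hc => sides_disjoint hac hvu hy_uv hc)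
        have hMyz_uv : Mside T.G T.ψ y z ⊆ Mside T.G T.ψ u v := mside_mono hSyz_uv hSvu_zy
        have hres : Resolves T.G T.ψ u v (s(s(m₁,m₂),s(n₁,n₂))) := by
          refine ⟨hvu, m₁, m₂, n₁, n₂, hm12, hn12, hMyz_uv hm1, hMyz_uv hm2, ?_, ?_, rfl⟩
          · rw [hMB]; exact hD1B (hMz ▸ hn1)
          · rw [hMB]; exact hD1B (hMz ▸ hn2)
        exact hexcl3 u v hyzuv.symm hres
      · -- impossible: ℓa on both sides of (u,v)
        have hSyz_vu : side T.G y z ⊆ side T.G v u :=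
          side_subset_side hy_vu (fun hc => sides_disjoint hac hintyz.1 hc hu_zy)
        exact sides_disjoint hac hvu hℓa_uv (hSyz_vu hℓa_yz)
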